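/- The number of parking functions of size n whose parking permutation avoids 123, 132, and 231 equals the binomial coefficient binom(n+1, 2). -/

import Mathlib

open Finset

noncomputable section

/-- The parking process over the first `k` cars (cars are `0,...,k-1`, i.e. cars `1,...,k`
in 1-indexed terms): returns `some occ` where `occ` maps each spot to the car parked there
(`none` meaning empty), or `none` if some car failed to park.  Car `c` drives to its
preferred spot `f c` and parks at the first free spot with index `≥ f c`, failing if
no such spot exists. -/
def parkAux {n : ℕ} (f : Fin n → Fin n) : ℕ → Option (Fin n → Option (Fin n))
  | 0 => some fun _ => none
  | k + 1 =>
    (parkAux f k).bind fun occ =>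
      if h : k < n then
        if hS : (Finset.univ.filter fun s => f ⟨k, h⟩ ≤ s ∧ occ s = none).Nonempty then
          some (Function.update occ
            ((Finset.univ.filter fun s => f ⟨k, h⟩ ≤ s ∧ occ s = none).min' hS)
            (some ⟨k, h⟩))
        else none
      else some occ

/-- All `n` cars park successfully. -/
def AllPark {n : ℕ} (f : Fin n → Fin n) : Prop := (parkAux f n).isSome

/-- `f` is a parking function: for every `i ∈ [n]`, at least `i` cars prefer
the first `i` spots.  (Here `i : Fin n` denotes the `(i+1)`-st spot, 0-indexed.) -/
def IsParkingFunction {n : ℕ} (f : Fin n → Fin n) : Prop :=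
  ∀ i : Fin n, i.val + 1 ≤ (Finset.univ.filter fun j => f j ≤ i).card

/-- `ρ` is the parking permutation of `f`: after all cars have parked,
spot `i` is occupied by car `ρ i`. -/
def IsParkingPerm {n : ℕ} (f : Fin n → Fin n) (ρ : Equiv.Perm (Fin n)) : Prop :=
  parkAux f n = some fun i => some (ρ i)

/-- `π` contains `σ` as a pattern. -/
def ContainsPattern {n m : ℕ} (π : Equiv.Perm (Fin n)) (σ : Equiv.Perm (Fin m)) : Prop :=
  ∃ g : Fin m → Fin n, StrictMono g ∧ ∀ a b : Fin m, σ a < σ b ↔ π (g a) < π (g b)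

/-- `ρ` avoids every pattern in the list `pats`. -/
def AvoidsAll {n : ℕ} (ρ : Equiv.Perm (Fin n)) (pats : List (Equiv.Perm (Fin 3))) : Prop :=
  ∀ σ ∈ pats, ¬ ContainsPattern ρ σ

/-- The number of parking functions of size `n` whose parking permutation avoids
all patterns in `pats`. -/
def pk (n : ℕ) (pats : List (Equiv.Perm (Fin 3))) : ℕ :=
  Nat.card {f : Fin n → Fin n // IsParkingFunction f ∧
    ∃ ρ : Equiv.Perm (Fin n), IsParkingPerm f ρ ∧ AvoidsAll ρ pats}

def p123 : Equiv.Perm (Fin 3) := Equiv.ofBijective ![0, 1, 2] (by decide)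
def p132 : Equiv.Perm (Fin 3) := Equiv.ofBijective ![0, 2, 1] (by decide)
def p213 : Equiv.Perm (Fin 3) := Equiv.ofBijective ![1, 0, 2] (by decide)
def p231 : Equiv.Perm (Fin 3) := Equiv.ofBijective ![1, 2, 0] (by decide)
def p312 : Equiv.Perm (Fin 3) := Equiv.ofBijective ![2, 0, 1] (by decide)
def p321 : Equiv.Perm (Fin 3) := Equiv.ofBijective ![2, 1, 0] (by decide)

def fNat (n j x c : ℕ) : ℕ := if c < j then n-2-c else if c = j then x else n-1-c
def fS (n j x : ℕ) : Fin n → Fin n := fun c => if h : fNat n j x c.val < n then ⟨_, h⟩ else c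
def rhoNat (n j s : ℕ) : ℕ := if s = n-1 then j else if n-1-j ≤ s then n-2-s else n-1-s
def rhoF (n j : ℕ) : Fin n → Fin n := fun s => if h : rhoNat n j s.val < n then ⟨_, h⟩ else s
def spotNat (n j k : ℕ) : ℕ := if k < j then n-2-k else if k = j then n-1 else n-1-k
def occCond (n j k s : ℕ) : Prop := (k ≤ j ∧ n ≤ s+k+1 ∧ s+2 ≤ n) ∨ (j < k ∧ n ≤ s+k)
instance (n j k s : ℕ) : Decidable (occCond n j k s) := by unfold occCond; infer_instance
def occE (n j k : ℕ) : Fin n → Option (Fin n) := fun s => if occCond n j k s.val then some (rhoF n j s) else none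
def fCon {n : ℕ} (j : ℕ) (f : Fin n → Fin n) (k : ℕ) (hk : k < n) : Prop :=
  (k = j ∧ n-1-j ≤ (f ⟨k,hk⟩).val) ∨ (k ≠ j ∧ (f ⟨k,hk⟩).val = spotNat n j k)

lemma spotNat_spec (n j k : ℕ) :
    (k < j ∧ spotNat n j k = n-2-k) ∨ (k = j ∧ spotNat n j k = n-1) ∨
    (j < k ∧ spotNat n j k = n-1-k) := by
  unfold spotNat; split_ifs <;> omega

lemma rhoNat_spec (n j s : ℕ) :
    (s = n-1 ∧ rhoNat n j s = j) ∨ (s ≠ n-1 ∧ n-1-j ≤ s ∧ rhoNat n j s = n-2-s) ∨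
    (s ≠ n-1 ∧ s + j + 1 < n ∧ rhoNat n j s = n-1-s) := by
  unfold rhoNat; split_ifs <;> omega

lemma fNat_spec (n j x c : ℕ) :
    (c < j ∧ fNat n j x c = n-2-c) ∨ (c = j ∧ fNat n j x c = x) ∨
    (j < c ∧ fNat n j x c = n-1-c) := by
  unfold fNat; split_ifs <;> omega

lemma fNat_lt {n j x c : ℕ} (hn : 0 < n) (hx : x < n) : fNat n j x c < n := by
  unfold fNat; split_ifs <;> omega

lemma fS_val {n j x : ℕ} (hn : 0 < n) (hx : x < n) (c : Fin n) :
    (fS n j x c).val = fNat n j x c.val := by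
  unfold fS; rw [dif_pos (fNat_lt hn hx)]

lemma rhoNat_lt {n j s : ℕ} (hj : j < n) (hs : s < n) : rhoNat n j s < n := by
  unfold rhoNat; split_ifs <;> omega

lemma rhoF_val {n j : ℕ} (hj : j < n) (s : Fin n) : (rhoF n j s).val = rhoNat n j s.val := by
  unfold rhoF; rw [dif_pos (rhoNat_lt hj s.isLt)]

lemma rhoNat_inj {n j s t : ℕ} (hj : j < n) (hs : s < n) (ht : t < n)
    (h : rhoNat n j s = rhoNat n j t) : s = t := by
  unfold rhoNat at h; split_ifs at h <;> omega

lemma spotNat_lt {n j k : ℕ} (hj : j < n) (hk : k < n) : spotNat n j k < n := by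
  unfold spotNat; split_ifs <;> omega

lemma rhoNat_spotNat {n j k : ℕ} (hj : j < n) (hk : k < n) :
    rhoNat n j (spotNat n j k) = k := by
  unfold rhoNat spotNat; split_ifs <;> omega

lemma not_occCond_of_none {n j k : ℕ} {s : Fin n} (h : occE n j k s = none) :
    ¬ occCond n j k s.val := by
  intro hc; rw [occE, if_pos hc] at h; cases h

lemma none_of_not_occCond {n j k : ℕ} {s : Fin n} (h : ¬ occCond n j k s.val) :
    occE n j k s = none := by rw [occE, if_neg h]

lemma update_occE {n j k : ℕ} (hj : j < n) (hk : k < n) :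
    Function.update (occE n j k) ⟨spotNat n j k, spotNat_lt hj hk⟩ (some ⟨k, hk⟩)
      = occE n j (k+1) := by
  have hsp := spotNat_spec n j k
  funext s
  rw [Function.update_apply]
  split_ifs with hsm
  · subst hsm
    have hcond : occCond n j (k+1) (⟨spotNat n j k, spotNat_lt hj hk⟩ : Fin n).val := by
      rw [Fin.val_mk]; unfold occCond; omega
    rw [occE]
    simp only [if_pos hcond]
    congr 1
    apply Fin.ext
    rw [rhoF_val hj, Fin.val_mk]
    exact (rhoNat_spotNat hj hk).symm
  · have hne : s.val ≠ spotNat n j k := by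
      intro h; exact hsm (Fin.ext (by rw [Fin.val_mk]; exact h))
    have hiff : occCond n j k s.val ↔ occCond n j (k+1) s.val := by
      have := s.isLt; unfold occCond; omega
    rw [occE, occE]
    exact if_congr hiff rfl rfl

lemma mem_filterS {n j k : ℕ} (hj : j < n) (hk : k < n) (f : Fin n → Fin n)
    (hc : fCon j f k hk) :
    (⟨spotNat n j k, spotNat_lt hj hk⟩ : Fin n) ∈
      (Finset.univ.filter fun s => f ⟨k, hk⟩ ≤ s ∧ occE n j k s = none) := by
  have hsp := spotNat_spec n j k
  rw [Finset.mem_filter]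
  refine ⟨Finset.mem_univ _, ?_, ?_⟩
  · rw [Fin.le_def]
    show (f ⟨k, hk⟩).val ≤ spotNat n j k
    have := (f ⟨k, hk⟩).isLt
    unfold fCon at hc; omega
  · apply none_of_not_occCond
    show ¬ occCond n j k (spotNat n j k)
    unfold occCond; omega

lemma min_filterS {n j k : ℕ} (hj : j < n) (hk : k < n) (f : Fin n → Fin n)
    (hc : fCon j f k hk) : ∀ s ∈
      (Finset.univ.filter fun s => f ⟨k, hk⟩ ≤ s ∧ occE n j k s = none),
      (⟨spotNat n j k, spotNat_lt hj hk⟩ : Fin n) ≤ s := by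
  have hsp := spotNat_spec n j k
  intro s hs
  rw [Finset.mem_filter] at hs
  obtain ⟨-, hle, hnone⟩ := hs
  have hno := not_occCond_of_none hnone
  rw [Fin.le_def] at hle ⊢
  show spotNat n j k ≤ s.val
  have := s.isLt
  unfold fCon at hc; unfold occCond at hno; omega

lemma parkAux_succ {n : ℕ} (f : Fin n → Fin n) (k : ℕ) :
    parkAux f (k+1) = (parkAux f k).bind fun occ =>
      if h : k < n then
        if hS : (Finset.univ.filter fun s => f ⟨k, h⟩ ≤ s ∧ occ s = none).Nonempty then
          some (Function.update occ
            ((Finset.univ.filter fun s => f ⟨k, h⟩ ≤ s ∧ occ s = none).min' hS)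
            (some ⟨k, h⟩))
        else none
      else some occ := rfl

lemma parkAux_isSome_mono {n : ℕ} (f : Fin n → Fin n) {k l : ℕ} (hkl : k ≤ l)
    (h : (parkAux f l).isSome) : (parkAux f k).isSome := by
  induction l with
  | zero => rw [Nat.le_zero.mp hkl]; exact h
  | succ l ih =>
    rcases Nat.lt_or_ge k (l+1) with hk | hk
    · apply ih (by omega)
      rw [parkAux_succ] at h
      cases hp : parkAux f l with
      | none => rw [hp] at h; simp at h
      | some o => rfl
    · have : k = l + 1 := by omega
      exact this ▸ h

lemma parkAux_mono {n : ℕ} (f : Fin n → Fin n) {k l : ℕ} (hkl : k ≤ l) {o o' : Fin n → Option (Fin n)}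
    (hk : parkAux f k = some o) (hl : parkAux f l = some o')
    {s : Fin n} {c : Fin n} (h : o s = some c) : o' s = some c := by
  induction l generalizing o' with
  | zero =>
    have : k = 0 := by omega
    subst this; rw [hk] at hl; cases hl; exact h
  | succ l ih =>
    rcases Nat.lt_or_ge k (l+1) with hklt | hkge
    · rw [parkAux_succ] at hl
      cases hp : parkAux f l with
      | none => rw [hp] at hl; simp at hl
      | some o1 =>
        rw [hp] at hl
        have h1 : o1 s = some c := ih (by omega) hp
        rw [Option.bind_some] at hl
        split_ifs at hl with h2 h3
        · cases hl
          rw [Function.update_apply]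
          split_ifs with hsm
          · exfalso
            have hm := Finset.min'_mem _ h3
            rw [Finset.mem_filter] at hm
            rw [← hsm] at hm
            rw [h1] at hm
            simp at hm
          · exact h1
        · cases hl; exact h1
    · have : k = l + 1 := by omega
      subst this; rw [hk] at hl; cases hl; exact h

lemma fCon_fS {n j x : ℕ} (hn : 0 < n) (hj : j < n) (hx1 : n-1-j ≤ x) (hx : x < n)
    (k : ℕ) (hk : k < n) : fCon j (fS n j x) k hk := by
  have h1 := fNat_spec n j x k
  have h2 := spotNat_spec n j k
  have h3 : (fS n j x ⟨k,hk⟩).val = fNat n j x k := fS_val hn hx ⟨k,hk⟩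
  unfold fCon; omega

lemma parkAux_fS {n j x : ℕ} (hn : 0 < n) (hj : j < n) (hx1 : n-1-j ≤ x) (hx : x < n) :
    ∀ k, k ≤ n → parkAux (fS n j x) k = some (occE n j k) := by
  intro k
  induction k with
  | zero =>
    intro _
    have h0 : occE n j 0 = fun _ => none :=
      funext fun s => none_of_not_occCond (by have := s.isLt; unfold occCond; omega)
    rw [h0]; rfl
  | succ k ih =>
    intro hk1
    have hk : k < n := by omega
    rw [parkAux_succ, ih (by omega), Option.bind_some, dif_pos hk]
    have hcon := fCon_fS hn hj hx1 hx k hk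
    have hmem := mem_filterS hj hk (fS n j x) hcon
    have hne : (Finset.univ.filter fun s => fS n j x ⟨k, hk⟩ ≤ s ∧ occE n j k s = none).Nonempty :=
      ⟨_, hmem⟩
    rw [dif_pos hne]
    have hmin : (Finset.univ.filter fun s => fS n j x ⟨k, hk⟩ ≤ s ∧ occE n j k s = none).min' hne
        = ⟨spotNat n j k, spotNat_lt hj hk⟩ :=
      le_antisymm (Finset.min'_le _ _ hmem) (Finset.le_min' _ _ _ (min_filterS hj hk _ hcon))
    rw [hmin, update_occE hj hk]

lemma parkAux_fS_n {n j x : ℕ} (hn : 0 < n) (hj : j < n) (hx1 : n-1-j ≤ x) (hx : x < n) :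
    parkAux (fS n j x) n = some (fun s => some (rhoF n j s)) := by
  rw [parkAux_fS hn hj hx1 hx n le_rfl]
  congr 1
  funext s
  rw [occE, if_pos]
  have := s.isLt
  unfold occCond; omega

lemma backward_sim {n j : ℕ} (hn : 0 < n) (hj : j < n) (f : Fin n → Fin n)
    (hpark : parkAux f n = some (fun s => some (rhoF n j s))) :
    ∀ k, k ≤ n → parkAux f k = some (occE n j k) ∧
      ∀ c (hc : c < n), c < k → fCon j f c hc := by
  intro k
  induction k with
  | zero =>
    intro _
    constructor
    · have h0 : occE n j 0 = fun _ => none :=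
        funext fun s => none_of_not_occCond (by have := s.isLt; unfold occCond; omega)
      rw [h0]; rfl
    · intro c hc hc0; omega
  | succ k ih =>
    intro hk1
    have hk : k < n := by omega
    obtain ⟨hpk, hcon⟩ := ih (by omega)
    have hsome : (parkAux f (k+1)).isSome :=
      parkAux_isSome_mono f (show k+1 ≤ n by omega) (by rw [hpark]; rfl)
    rw [parkAux_succ, hpk, Option.bind_some, dif_pos hk] at hsome
    have hne : (Finset.univ.filter fun s => f ⟨k, hk⟩ ≤ s ∧ occE n j k s = none).Nonempty := by
      by_contra h
      rw [dif_neg h] at hsome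
      simp at hsome
    set m := (Finset.univ.filter fun s => f ⟨k, hk⟩ ≤ s ∧ occE n j k s = none).min' hne with hm
    have hp1 : parkAux f (k+1) = some (Function.update (occE n j k) m (some ⟨k, hk⟩)) := by
      rw [parkAux_succ, hpk, Option.bind_some, dif_pos hk, dif_pos hne]
    -- persistence : the final occupancy at m is car k
    have hfin : (fun s => some (rhoF n j s)) m = some (⟨k, hk⟩ : Fin n) :=
      parkAux_mono f (show k+1 ≤ n by omega) hp1 hpark (by rw [Function.update_self])
    have hrho : rhoNat n j m.val = k := by
      have := congrArg (fun o => (Option.map Fin.val o)) hfin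
      simp only [Option.map_some] at this
      have h2 : (rhoF n j m).val = k := by
        have := Option.some.inj this; exact this
      rw [rhoF_val hj] at h2; exact h2
    have hmval : m.val = spotNat n j k := by
      apply rhoNat_inj hj m.isLt (spotNat_lt hj hk)
      rw [hrho, rhoNat_spotNat hj hk]
    -- membership facts
    have hmm := Finset.min'_mem _ hne
    rw [Finset.mem_filter] at hmm
    obtain ⟨-, hle, -⟩ := hmm
    rw [Fin.le_def, hmval] at hle
    -- the new constraint on f k
    have hfc : fCon j f k hk := by
      have hsp := spotNat_spec n j k
      by_cases hocc : occCond n j k (f ⟨k, hk⟩).val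
      · unfold occCond at hocc; unfold fCon; omega
      · have hmem2 : f ⟨k, hk⟩ ∈
            (Finset.univ.filter fun s => f ⟨k, hk⟩ ≤ s ∧ occE n j k s = none) := by
          rw [Finset.mem_filter]
          exact ⟨Finset.mem_univ _, le_refl _, none_of_not_occCond hocc⟩
        have hmin := Finset.min'_le _ _ hmem2
        rw [← hm, Fin.le_def, hmval] at hmin
        unfold occCond at hocc; unfold fCon; omega
    constructor
    · rw [hp1]
      have : m = (⟨spotNat n j k, spotNat_lt hj hk⟩ : Fin n) := Fin.ext hmval
      rw [this, update_occE hj hk]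
    · intro c hc hck
      rcases Nat.lt_or_ge c k with h | h
      · exact hcon c hc h
      · have : c = k := by omega
        subst this; exact hfc

lemma f_eq_fS_of_fCon {n j : ℕ} (hn : 0 < n) (hj : j < n) (f : Fin n → Fin n)
    (hfc : ∀ c (hc : c < n), fCon j f c hc) :
    f = fS n j (f ⟨j, hj⟩).val ∧ n-1-j ≤ (f ⟨j, hj⟩).val := by
  set x := (f ⟨j, hj⟩).val with hx
  have hxlt : x < n := (f ⟨j, hj⟩).isLt
  have hxj : n-1-j ≤ x := by
    have h := hfc j hj
    unfold fCon at h
    have hsp := spotNat_spec n j j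
    omega
  refine ⟨?_, hxj⟩
  funext c
  apply Fin.ext
  have h := hfc c.val c.isLt
  unfold fCon at h
  have he : f ⟨c.val, c.isLt⟩ = f c := rfl
  rw [he] at h
  have h2 : (fS n j x c).val = fNat n j x c.val := fS_val hn hxlt c
  have h3 := fNat_spec n j x c.val
  have h4 := spotNat_spec n j c.val
  rcases Nat.lt_trichotomy c.val j with hc | hc | hc
  · omega
  · have h5 : (f c).val = x := by
      rw [show c = ⟨j, hj⟩ from Fin.ext hc]
    omega
  · omega

def carNat (n j v : ℕ) : ℕ := if n-1-j ≤ v then n-2-v else n-1-v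
def carF (n j : ℕ) : Fin n → Fin n := fun v => if h : carNat n j v.val < n then ⟨_, h⟩ else v

lemma carNat_spec (n j v : ℕ) :
    (n-1-j ≤ v ∧ carNat n j v = n-2-v) ∨ (v < n-1-j ∧ carNat n j v = n-1-v) := by
  unfold carNat; split_ifs <;> omega

lemma carF_val {n j : ℕ} (hn : 0 < n) (v : Fin n) : (carF n j v).val = carNat n j v.val := by
  have : carNat n j v.val < n := by
    have := carNat_spec n j v.val; have := v.isLt; omega
  unfold carF; rw [dif_pos this]

lemma fS_carF {n j x : ℕ} (hn : 0 < n) (hj : j < n) (hx : x < n) (v : Fin n)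
    (hv : v.val + 2 ≤ n) : fS n j x (carF n j v) = v := by
  apply Fin.ext
  rw [fS_val hn hx, carF_val hn]
  have h1 := carNat_spec n j v.val
  have h2 := fNat_spec n j x (carNat n j v.val)
  omega

lemma isPF_fS {n j x : ℕ} (hn : 0 < n) (hj : j < n) (hx : x < n) :
    ∀ i : Fin n, i.val + 1 ≤ (Finset.univ.filter fun c => fS n j x c ≤ i).card := by
  intro i
  rcases Nat.lt_or_ge (i.val+1) n with hi | hi
  · have hcard : (Finset.Iic i).card = i.val + 1 := Fin.card_Iic i
    rw [← hcard]
    apply Finset.card_le_card_of_injOn (carF n j)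
    · intro v hv
      rw [Finset.mem_coe, Finset.mem_Iic] at hv
      rw [Finset.mem_coe, Finset.mem_filter]
      refine ⟨Finset.mem_univ _, ?_⟩
      have h2 : fS n j x (carF n j v) = v := by
        apply fS_carF hn hj hx
        rw [Fin.le_def] at hv
        omega
      rw [h2]; exact hv
    · intro a ha b hb hab
      rw [Finset.mem_coe, Finset.mem_Iic] at ha hb
      have h2 : fS n j x (carF n j a) = a := by
        apply fS_carF hn hj hx; rw [Fin.le_def] at ha; omega
      have h3 : fS n j x (carF n j b) = b := by
        apply fS_carF hn hj hx; rw [Fin.le_def] at hb; omega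
      rw [← h2, ← h3, hab]
  · have hall : (Finset.univ.filter fun c => fS n j x c ≤ i) = Finset.univ := by
      apply Finset.filter_true_of_mem
      intro c _
      rw [Fin.le_def]
      have := (fS n j x c).isLt
      have := i.isLt
      omega
    rw [hall, Finset.card_univ, Fintype.card_fin]
    omega

lemma rhoF_inj {n j : ℕ} (hj : j < n) : Function.Injective (rhoF n j) := by
  intro s t h
  apply Fin.ext
  apply rhoNat_inj hj s.isLt t.isLt
  rw [← rhoF_val hj, ← rhoF_val hj, h]

def DecFront {n : ℕ} (ρ : Equiv.Perm (Fin n)) : Prop :=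
  ∀ s t : Fin n, s < t → t.val + 2 ≤ n → ρ t < ρ s

lemma avoids_of_decFront {n : ℕ} (ρ : Equiv.Perm (Fin n)) (hd : DecFront ρ) :
    AvoidsAll ρ [p123, p132, p231] := by
  intro σ hσ hcont
  obtain ⟨g, hg, hpat⟩ := hcont
  have h01 : σ 0 < σ 1 := by
    simp only [List.mem_cons, List.not_mem_nil, or_false] at hσ
    rcases hσ with h | h | h <;> subst h <;> decide
  have hr1 : ρ (g 0) < ρ (g 1) := (hpat 0 1).mp h01
  have hg01 : g 0 < g 1 := hg (by decide)
  have hg12 : g 1 < g 2 := hg (by decide)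
  have hb : (g 1).val + 2 ≤ n := by
    have := (g 2).isLt
    rw [Fin.lt_def] at hg12
    omega
  exact absurd hr1 (not_lt.mpr (le_of_lt (hd (g 0) (g 1) hg01 hb)))

lemma vec3_eq {α : Type*} (s t u : α) (a : Fin 3) :
    ![s,t,u] a = if a.val = 0 then s else if a.val = 1 then t else u := by
  fin_cases a <;> rfl

lemma p123_val (a : Fin 3) :
    (p123 a).val = if a.val = 0 then 0 else if a.val = 1 then 1 else 2 := by
  fin_cases a <;> rfl

lemma p132_val (a : Fin 3) :
    (p132 a).val = if a.val = 0 then 0 else if a.val = 1 then 2 else 1 := by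
  fin_cases a <;> rfl

lemma p231_val (a : Fin 3) :
    (p231 a).val = if a.val = 0 then 1 else if a.val = 1 then 2 else 0 := by
  fin_cases a <;> rfl

lemma decFront_of_avoids {n : ℕ} (ρ : Equiv.Perm (Fin n))
    (ha : AvoidsAll ρ [p123, p132, p231]) : DecFront ρ := by
  intro s t hst ht2
  by_contra hcon
  have hne : ρ s ≠ ρ t := fun h => (Fin.lt_def.mp hst).ne (congrArg Fin.val (ρ.injective h))
  have hlt : ρ s < ρ t := lt_of_le_of_ne (not_lt.mp hcon) hne
  have hn1 : n - 1 < n := by omega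
  obtain ⟨u, hu⟩ : ∃ u : Fin n, u.val = n - 1 := ⟨⟨n-1, hn1⟩, rfl⟩
  have hstv := Fin.lt_def.mp hst
  have htu : t < u := by rw [Fin.lt_def]; omega
  have hsu : s < u := lt_trans hst htu
  have htuv := Fin.lt_def.mp htu
  have hsuv := Fin.lt_def.mp hsu
  have hgmono : StrictMono ![s, t, u] := by
    intro a b hab
    rw [Fin.lt_def] at hab ⊢
    rw [vec3_eq, vec3_eq]
    split_ifs <;> omega
  have hus : ρ u ≠ ρ s := fun h => (Fin.lt_def.mp hsu).ne' (congrArg Fin.val (ρ.injective h))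
  have hut : ρ u ≠ ρ t := fun h => (Fin.lt_def.mp htu).ne' (congrArg Fin.val (ρ.injective h))
  have hsval := Fin.lt_def.mp hlt
  rcases lt_trichotomy (ρ u) (ρ s) with hc | hc | hc
  · apply ha p231 (by simp)
    refine ⟨![s, t, u], hgmono, ?_⟩
    have h1 := Fin.lt_def.mp hc
    intro a b
    rw [Fin.lt_def, Fin.lt_def, p231_val a, p231_val b, vec3_eq, vec3_eq]
    split_ifs <;> omega
  · exact absurd hc hus
  · rcases lt_trichotomy (ρ u) (ρ t) with hc2 | hc2 | hc2
    · apply ha p132 (by simp)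
      refine ⟨![s, t, u], hgmono, ?_⟩
      have h1 := Fin.lt_def.mp hc
      have h2 := Fin.lt_def.mp hc2
      intro a b
      rw [Fin.lt_def, Fin.lt_def, p132_val a, p132_val b, vec3_eq, vec3_eq]
      split_ifs <;> omega
    · exact absurd hc2 hut
    · apply ha p123 (by simp)
      refine ⟨![s, t, u], hgmono, ?_⟩
      have h1 := Fin.lt_def.mp hc
      have h2 := Fin.lt_def.mp hc2
      intro a b
      rw [Fin.lt_def, Fin.lt_def, p123_val a, p123_val b, vec3_eq, vec3_eq]
      split_ifs <;> omega

lemma rho_eq_of_decFront {n : ℕ} (hn : 0 < n) (ρ : Equiv.Perm (Fin n)) (hd : DecFront ρ) :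
    ∀ s : Fin n, (ρ s).val = rhoNat n (ρ ⟨n-1, Nat.sub_lt hn Nat.one_pos⟩).val s.val := by
  set last : Fin n := ⟨n-1, Nat.sub_lt hn Nat.one_pos⟩ with hlastdef
  have hlastval : last.val = n - 1 := rfl
  set j := (ρ last).val with hj
  intro s
  have hspec := rhoNat_spec n j s.val
  have hjlt : j < n := (ρ last).isLt
  rcases eq_or_ne s.val (n-1) with hs | hs
  · have : s = last := Fin.ext (by rw [hlastval, hs])
    rw [this, ← hj, hlastval]
    have hspec2 := rhoNat_spec n j (n-1)
    omega
  · have hs2 : s.val + 2 ≤ n := by have := s.isLt; omega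
    have hsl : s < last := by rw [Fin.lt_def, hlastval]; omega
    have hρne : ρ s ≠ ρ last := fun h => hs (by rw [ρ.injective h, hlastval])
    have hρlt : (ρ s).val < n := (ρ s).isLt
    set A := Finset.univ.filter (fun t => ρ s < ρ t) with hA
    have himg : Finset.image ρ A = Finset.Ioi (ρ s) := by
      ext v
      simp only [hA, Finset.mem_image, Finset.mem_filter, Finset.mem_univ, true_and,
        Finset.mem_Ioi]
      constructor
      · rintro ⟨t, h1, h2⟩; exact h2 ▸ h1
      · intro h; exact ⟨ρ.symm v, by simpa using h, by simp⟩
    have hcard1 : A.card = n - 1 - (ρ s).val := by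
      rw [← Finset.card_image_of_injective A ρ.injective, himg, Fin.card_Ioi]
    rcases lt_trichotomy (ρ s).val j with hc | hc | hc
    · -- ρ s < ρ last : A = insert last (Iio s)
      have hAeq : A = insert last (Finset.Iio s) := by
        ext t
        simp only [hA, Finset.mem_filter, Finset.mem_univ, true_and, Finset.mem_insert,
          Finset.mem_Iio]
        constructor
        · intro h
          rcases eq_or_ne t.val (n-1) with ht | ht
          · exact Or.inl (Fin.ext (by rw [ht, hlastval]))
          · right
            rcases lt_trichotomy t s with h2 | h2 | h2
            · exact h2
            · exact absurd (h2 ▸ h) (lt_irrefl _)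
            · exact absurd h (not_lt.mpr (le_of_lt (hd s t h2 (by have := t.isLt; omega))))
        · rintro (rfl | h)
          · rw [Fin.lt_def]; omega
          · exact hd t s h hs2
      have hcard2 : A.card = s.val + 1 := by
        rw [hAeq, Finset.card_insert_of_notMem (by
          simp only [Finset.mem_Iio]
          exact not_lt.mpr (le_of_lt hsl)), Fin.card_Iio]
      omega
    · exact absurd (Fin.ext hc) hρne
    · -- ρ last < ρ s : A = Iio s
      have hAeq : A = Finset.Iio s := by
        ext t
        simp only [hA, Finset.mem_filter, Finset.mem_univ, true_and, Finset.mem_Iio]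
        constructor
        · intro h
          rcases eq_or_ne t.val (n-1) with ht | ht
          · exfalso
            have : t = last := Fin.ext (by rw [ht, hlastval])
            rw [this] at h
            rw [Fin.lt_def] at h
            omega
          · rcases lt_trichotomy t s with h2 | h2 | h2
            · exact h2
            · exact absurd (h2 ▸ h) (lt_irrefl _)
            · exact absurd h (not_lt.mpr (le_of_lt (hd s t h2 (by have := t.isLt; omega))))
        · intro h
          exact hd t s h hs2
      have hcard2 : A.card = s.val := by rw [hAeq, Fin.card_Iio]
      omega

noncomputable def rhoPerm (n j : ℕ) (hj : j < n) : Equiv.Perm (Fin n) :=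
  Equiv.ofBijective (rhoF n j) ((Finite.injective_iff_bijective).mp (rhoF_inj hj))

lemma decFront_rhoPerm {n j : ℕ} (hj : j < n) : DecFront (rhoPerm n j hj) := by
  intro s t hst ht2
  rw [Fin.lt_def] at hst ⊢
  show (rhoF n j t).val < (rhoF n j s).val
  rw [rhoF_val hj, rhoF_val hj]
  have h1 := rhoNat_spec n j s.val
  have h2 := rhoNat_spec n j t.val
  have := s.isLt
  omega

lemma good_fS {n j x : ℕ} (hn : 0 < n) (hj : j < n) (hx1 : n-1-j ≤ x) (hx : x < n) :
    IsParkingFunction (fS n j x) ∧ ∃ ρ : Equiv.Perm (Fin n),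
      IsParkingPerm (fS n j x) ρ ∧ AvoidsAll ρ [p123, p132, p231] := by
  refine ⟨isPF_fS hn hj hx, rhoPerm n j hj, ?_, avoids_of_decFront _ (decFront_rhoPerm hj)⟩
  show parkAux (fS n j x) n = some fun i => some (rhoPerm n j hj i)
  rw [parkAux_fS_n hn hj hx1 hx]
  rfl

lemma good_to_fS {n : ℕ} (hn : 0 < n) (f : Fin n → Fin n)
    (h : ∃ ρ : Equiv.Perm (Fin n), IsParkingPerm f ρ ∧ AvoidsAll ρ [p123, p132, p231]) :
    ∃ j x : ℕ, j < n ∧ n-1-j ≤ x ∧ x < n ∧ f = fS n j x := by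
  obtain ⟨ρ, hperm, hav⟩ := h
  have hd := decFront_of_avoids ρ hav
  have hpin := rho_eq_of_decFront hn ρ hd
  set j := (ρ ⟨n-1, Nat.sub_lt hn Nat.one_pos⟩).val with hjdef
  have hj : j < n := Fin.isLt _
  have heq : (fun i => some (ρ i)) = fun s => some (rhoF n j s) := by
    funext s
    exact congrArg some (Fin.ext (by rw [rhoF_val hj]; exact hpin s))
  have hpark : parkAux f n = some (fun s => some (rhoF n j s)) := by
    rw [← heq]; exact hperm
  obtain ⟨-, hcon⟩ := backward_sim hn hj f hpark n le_rfl
  obtain ⟨hfeq, hxge⟩ := f_eq_fS_of_fCon hn hj f (fun c hc => hcon c hc hc)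
  exact ⟨j, (f ⟨j, hj⟩).val, hj, hxge, (f ⟨j, hj⟩).isLt, hfeq⟩

lemma fS_inj {n j x j' x' : ℕ} (hn : 0 < n) (hj : j < n) (hj' : j' < n)
    (hx1 : n-1-j ≤ x) (hx : x < n) (hx1' : n-1-j' ≤ x') (hx' : x' < n)
    (h : fS n j x = fS n j' x') : j = j' ∧ x = x' := by
  have key : ∀ c, c < n → fNat n j x c = fNat n j' x' c := by
    intro c hc
    have h1 : (fS n j x ⟨c, hc⟩).val = fNat n j x c := fS_val hn hx ⟨c, hc⟩
    have h2 : (fS n j' x' ⟨c, hc⟩).val = fNat n j' x' c := fS_val hn hx' ⟨c, hc⟩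
    rw [h] at h1
    omega
  rcases lt_trichotomy j j' with hc | hc | hc
  · have := key j hj
    have s1 := fNat_spec n j x j
    have s2 := fNat_spec n j' x' j
    omega
  · subst hc
    have := key j hj
    have s1 := fNat_spec n j x j
    have s2 := fNat_spec n j x' j
    omega
  · have := key j' hj'
    have s1 := fNat_spec n j x j'
    have s2 := fNat_spec n j' x' j'
    omega

theorem stmt7 (n : ℕ) (hn : 1 ≤ n) :
    pk n [p123, p132, p231] = Nat.choose (n + 1) 2 := by
  classical
  have hn0 : 0 < n := hn
  let F : (Σ jj : Fin n, Fin (jj.val + 1)) → {f : Fin n → Fin n // IsParkingFunction f ∧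
      ∃ ρ : Equiv.Perm (Fin n), IsParkingPerm f ρ ∧ AvoidsAll ρ [p123, p132, p231]} :=
    fun p => ⟨fS n p.1.val (n - 1 - p.1.val + p.2.val), by
      have hj : p.1.val < n := p.1.isLt
      have hx2 : p.2.val ≤ p.1.val := by have := p.2.isLt; omega
      exact good_fS hn0 hj (by omega) (by omega)⟩
  have hbij : Function.Bijective F := by
    constructor
    · rintro ⟨⟨j, hj⟩, ⟨y, hy⟩⟩ ⟨⟨j', hj'⟩, ⟨y', hy'⟩⟩ hpq
      have hjv : ((⟨j, hj⟩ : Fin n)).val = j := rfl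
      have hjv' : ((⟨j', hj'⟩ : Fin n)).val = j' := rfl
      have hv : fS n j (n - 1 - j + y) = fS n j' (n - 1 - j' + y') :=
        congrArg Subtype.val hpq
      obtain ⟨h1, h2⟩ := fS_inj hn0 hj hj' (by omega) (by omega) (by omega) (by omega) hv
      subst h1
      have : y = y' := by omega
      subst this
      rfl
    · rintro ⟨f, hpf, hex⟩
      obtain ⟨j, x, hj, hx1, hx, hfeq⟩ := good_to_fS hn0 f hex
      refine ⟨⟨⟨j, hj⟩, ⟨x - (n - 1 - j), by show x - (n - 1 - j) < j + 1; omega⟩⟩, ?_⟩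
      apply Subtype.ext
      show fS n j (n - 1 - j + (x - (n - 1 - j))) = f
      have harg : n - 1 - j + (x - (n - 1 - j)) = x := by omega
      rw [harg, hfeq]
  have hcongr := Nat.card_congr (Equiv.ofBijective F hbij)
  have hgoal : pk n [p123, p132, p231] = Nat.card (Σ jj : Fin n, Fin (jj.val + 1)) := by
    rw [pk, ← hcongr]
  rw [hgoal, Nat.card_eq_fintype_card, Fintype.card_sigma]
  simp only [Fintype.card_fin]
  have h1 : ∑ jj : Fin n, (jj.val + 1) = ∑ i ∈ Finset.range n, (i + 1) :=
    Fin.sum_univ_eq_sum_range (fun i => i + 1) n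
  have h2 : ∑ i ∈ Finset.range (n+1), i = (∑ i ∈ Finset.range n, (i + 1)) + 0 :=
    Finset.sum_range_succ' id n
  have h3 : (∑ i ∈ Finset.range (n+1), i) * 2 = (n+1) * n := by
    have := Finset.sum_range_id_mul_two (n+1)
    simpa using this
  have h4 : Nat.choose (n+1) 2 = (n+1) * n / 2 := by
    rw [Nat.choose_two_right]
    simp
  rw [h1, h4]
  omega
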